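/- Let u, v, X be generic matrices over a commutative noetherian ring R₀ as in the main construction, R the polynomial ring, H = H(u,X,v), and R̄ = R/H. For s = u_i (any i), the localization H_s of H at s is generated by the entries of uX together with the entries of the first column of vu − adjugate(X); consequently R̄_s is isomorphic to a localization of a polynomial ring in n² variables over R₀. -/

import Mathlib

set_option maxHeartbeats 1600000
set_option synthInstance.maxHeartbeats 400000
open Matrix MvPolynomial


/-- The ideal generated by the entries of `u·X`, of `X·v` and of `v·u − adjugate X`. -/
def idealH {R : Type*} [CommRing R] {n : ℕ} (u : Matrix (Fin 1) (Fin n) R)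
    (X : Matrix (Fin n) (Fin n) R) (v : Matrix (Fin n) (Fin 1) R) : Ideal R :=
  Ideal.span
    ((Set.range fun j : Fin n => (u * X) 0 j) ∪
      (Set.range fun i : Fin n => (X * v) i 0) ∪
      (Set.range fun p : Fin n × Fin n => (v * u - X.adjugate) p.1 p.2))



/-- If `u` is a row vector with `u · X = 0`, then `uᵢ · adj(X)ₖⱼ = uⱼ · adj(X)ₖᵢ`. -/
theorem key_adj {A : Type*} [CommRing A] {n : ℕ} (u : Fin n → A)
    (X : Matrix (Fin n) (Fin n) A) (h : ∀ l, ∑ m, u m * X m l = 0)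
    (i j k : Fin n) : u i * X.adjugate k j = u j * X.adjugate k i := by
  rcases eq_or_ne i j with rfl | hij
  · rfl
  have hrows : ∑ m, u m • X m = 0 := by
    funext l
    simpa [Finset.sum_apply] using h l
  set e : Fin n → A := Pi.single k 1 with he
  rw [adjugate_apply, adjugate_apply]
  set M := X.updateRow j e with hM
  set N := X.updateRow i e with hN
  have hMrow : ∀ m, m ≠ j → M m = X m := fun m hm => X.updateRow_ne hm
  have h4 : ∑ m ∈ Finset.univ.erase j, u m • X m = - (u j • X j) := by
    have h3 := Finset.sum_erase_add Finset.univ (fun m => u m • X m) (Finset.mem_univ j)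
    rw [hrows] at h3
    beta_reduce at h3
    linear_combination (norm := module) h3
  have hsum : ∑ m, u m • M m = u j • e - u j • X j := by
    rw [← Finset.sum_erase_add Finset.univ _ (Finset.mem_univ j)]
    have h1 : ∑ m ∈ Finset.univ.erase j, u m • M m = ∑ m ∈ Finset.univ.erase j, u m • X m :=
      Finset.sum_congr rfl fun m hm => by rw [hMrow m (Finset.ne_of_mem_erase hm)]
    rw [h1, h4, hM, updateRow_self]
    module
  have main := det_updateRow_sum M i u
  rw [hsum, sub_eq_add_neg, ← neg_smul, det_updateRow_add, det_updateRow_smul,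
    det_updateRow_smul] at main
  have hzero : (M.updateRow i e).det = 0 := by
    refine det_zero_of_row_eq hij ?_
    rw [updateRow_self, hM, updateRow_ne hij.symm, updateRow_self]
  have hswap : M.updateRow i (X j) = N.submatrix (Equiv.swap i j) id := by
    ext m l
    simp only [hM, hN, submatrix_apply, id_eq, updateRow_apply, Equiv.swap_apply_def]
    split_ifs <;> simp_all
  rw [hzero, hswap, det_permute, Equiv.Perm.sign_swap hij, smul_eq_mul] at main
  push_cast at main
  linear_combination -main

/-- `det X * uᵢ` lies in the ideal generated by the entries of `u·X`. -/
theorem det_mul_mem {A : Type*} [CommRing A] {n : ℕ} (u : Fin n → A)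
    (X : Matrix (Fin n) (Fin n) A) {I : Ideal A} (h : ∀ l, ∑ m, u m * X m l ∈ I)
    (i : Fin n) : X.det * u i ∈ I := by
  have hid : ∑ l, (∑ m, u m * X m l) * X.adjugate l i = X.det * u i := by
    have h1 : ∀ l, (∑ m, u m * X m l) * X.adjugate l i
        = ∑ m, u m * (X m l * X.adjugate l i) := by
      intro l; rw [Finset.sum_mul]; exact Finset.sum_congr rfl fun m _ => by ring
    simp_rw [h1]
    rw [Finset.sum_comm]
    have h2 : ∀ m, ∑ l, u m * (X m l * X.adjugate l i) = u m * (X * X.adjugate) m i := by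
      intro m; rw [mul_apply, Finset.mul_sum]
    simp_rw [h2, mul_adjugate, Matrix.smul_apply, one_apply, smul_eq_mul]
    simp [Finset.mul_sum, mul_ite, Finset.sum_ite_eq', mul_comm]
  rw [← hid]
  exact Ideal.sum_mem _ fun l _ => Ideal.mul_mem_right _ _ (h l)


/-- membership version of `key_adj`. -/
theorem key_adj_mem {A : Type*} [CommRing A] {n : ℕ} (u : Fin n → A)
    (X : Matrix (Fin n) (Fin n) A) {I : Ideal A} (h : ∀ l, ∑ m, u m * X m l ∈ I)
    (i j k : Fin n) : u i * X.adjugate k j - u j * X.adjugate k i ∈ I := by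
  rw [← Ideal.Quotient.eq_zero_iff_mem]
  have := key_adj (fun m => Ideal.Quotient.mk I (u m)) ((Ideal.Quotient.mk I).mapMatrix X)
    (fun l => by
      rw [show ∑ m, (Ideal.Quotient.mk I) (u m) * ((Ideal.Quotient.mk I).mapMatrix X) m l
          = Ideal.Quotient.mk I (∑ m, u m * X m l) by simp [Matrix.map_apply],
        Ideal.Quotient.eq_zero_iff_mem]
      exact h l) i j k
  rw [← RingHom.map_adjugate] at this
  simp only [RingHom.mapMatrix_apply, map_apply] at this
  rw [map_sub, _root_.map_mul, _root_.map_mul, this, sub_self]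

section Part2

variable (R₀ : Type u) [CommRing R₀] {n : ℕ} (i : Fin n)

abbrev BBσ (n : ℕ) (i : Fin n) : Type := Fin n ⊕ {p : Fin n × Fin n // p.1 ≠ i}
abbrev BB : Type _ := MvPolynomial (BBσ n i) R₀
abbrev TT (R₀ : Type u) [CommRing R₀] (n : ℕ) : Type _ :=
  MvPolynomial ((Fin n ⊕ Fin n) ⊕ Fin n × Fin n) R₀
noncomputable def wB : BB R₀ i := MvPolynomial.X (Sum.inl i)
abbrev LB := Localization.Away (wB R₀ i)
noncomputable def UU : Fin n → LB R₀ i := fun k =>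
  algebraMap (BB R₀ i) (LB R₀ i) (MvPolynomial.X (Sum.inl k))
noncomputable def iw : LB R₀ i := IsLocalization.Away.invSelf (wB R₀ i)
lemma hUi : UU R₀ i i = algebraMap (BB R₀ i) (LB R₀ i) (wB R₀ i) := rfl
lemma hUiw : algebraMap (BB R₀ i) (LB R₀ i) (wB R₀ i) * iw R₀ i = 1 :=
  IsLocalization.Away.mul_invSelf _
noncomputable def YY : Matrix (Fin n) (Fin n) (LB R₀ i) := fun m j =>
  if h : m = i then 0
  else algebraMap (BB R₀ i) (LB R₀ i) (MvPolynomial.X (Sum.inr ⟨(m, j), h⟩))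
noncomputable def Xt : Matrix (Fin n) (Fin n) (LB R₀ i) := fun m j =>
  if m = i then -iw R₀ i * ∑ m', UU R₀ i m' * YY R₀ i m' j else YY R₀ i m j
lemma Xt_ne {m : Fin n} (h : m ≠ i) (j : Fin n) :
    Xt R₀ i m j = algebraMap (BB R₀ i) (LB R₀ i) (MvPolynomial.X (Sum.inr ⟨(m, j), h⟩)) := by
  rw [Xt]; show (if _ then _ else _) = _; rw [if_neg h, YY]; exact dif_neg h
lemma R1 (j : Fin n) : ∑ m, UU R₀ i m * Xt R₀ i m j = 0 := by
  rw [← Finset.sum_erase_add _ _ (Finset.mem_univ i)]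
  have h1 : ∑ m ∈ Finset.univ.erase i, UU R₀ i m * Xt R₀ i m j
      = ∑ m ∈ Finset.univ.erase i, UU R₀ i m * YY R₀ i m j := by
    refine Finset.sum_congr rfl fun m hm => ?_
    congr 1
    rw [Xt]; exact if_neg (Finset.ne_of_mem_erase hm)
  have h2 : ∑ m ∈ Finset.univ.erase i, UU R₀ i m * YY R₀ i m j
      = ∑ m, UU R₀ i m * YY R₀ i m j := by
    rw [← Finset.sum_erase_add _ (fun m => UU R₀ i m * YY R₀ i m j) (Finset.mem_univ i)]
    rw [show YY R₀ i i j = 0 from dif_pos rfl, mul_zero, add_zero]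
  have h3 : Xt R₀ i i j = -iw R₀ i * ∑ m', UU R₀ i m' * YY R₀ i m' j := by
    rw [Xt]; exact if_pos rfl
  rw [h1, h2, h3, hUi]
  have h4 := hUiw R₀ i
  set a := algebraMap (BB R₀ i) (LB R₀ i) (wB R₀ i)
  set b := iw R₀ i
  set S := ∑ m', UU R₀ i m' * YY R₀ i m' j
  linear_combination (-S) * h4

lemma R2 : (Xt R₀ i).det = 0 := by
  have h0 : (Xt R₀ i).det * UU R₀ i i = 0 := by
    have key : ∑ l, (∑ m, UU R₀ i m * Xt R₀ i m l) * (Xt R₀ i).adjugate l i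
        = (Xt R₀ i).det * UU R₀ i i := by
      have h1 : ∀ l, (∑ m, UU R₀ i m * Xt R₀ i m l) * (Xt R₀ i).adjugate l i
          = ∑ m, UU R₀ i m * (Xt R₀ i m l * (Xt R₀ i).adjugate l i) := by
        intro l; rw [Finset.sum_mul]; exact Finset.sum_congr rfl fun m _ => by ring
      simp_rw [h1]
      rw [Finset.sum_comm]
      have h2 : ∀ m, ∑ l, UU R₀ i m * (Xt R₀ i m l * (Xt R₀ i).adjugate l i)
          = UU R₀ i m * (Xt R₀ i * (Xt R₀ i).adjugate) m i := by
        intro m; rw [mul_apply, Finset.mul_sum]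
      simp_rw [h2, mul_adjugate, Matrix.smul_apply, one_apply, smul_eq_mul]
      simp [Finset.mul_sum, mul_ite, Finset.sum_ite_eq', mul_comm]
    rw [← key]
    simp [R1]
  have h5 : (Xt R₀ i).det * (UU R₀ i i * iw R₀ i) = 0 := by
    rw [← mul_assoc, h0, zero_mul]
  rwa [hUi, hUiw, mul_one] at h5

lemma R3 (k j : Fin n) :
    UU R₀ i j * (Xt R₀ i).adjugate k i = UU R₀ i i * (Xt R₀ i).adjugate k j :=
  key_adj (UU R₀ i) (Xt R₀ i) (R1 R₀ i) j i k
noncomputable def φB : TT R₀ n →+* LB R₀ i :=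
  MvPolynomial.eval₂Hom ((algebraMap (BB R₀ i) (LB R₀ i)).comp MvPolynomial.C) fun t =>
    match t with
    | .inl (.inl k) => UU R₀ i k
    | .inl (.inr k) => iw R₀ i * (Xt R₀ i).adjugate k i
    | .inr p => Xt R₀ i p.1 p.2
lemma φB_C (r : R₀) : φB R₀ i (MvPolynomial.C r)
    = algebraMap (BB R₀ i) (LB R₀ i) (MvPolynomial.C r) := by simp [φB]
lemma φB_u (k : Fin n) : φB R₀ i (MvPolynomial.X (Sum.inl (Sum.inl k))) = UU R₀ i k := by
  simp only [φB, eval₂Hom_X']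
lemma φB_v (k : Fin n) :
    φB R₀ i (MvPolynomial.X (Sum.inl (Sum.inr k))) = iw R₀ i * (Xt R₀ i).adjugate k i := by
  simp only [φB, eval₂Hom_X']
lemma φB_x (p : Fin n × Fin n) : φB R₀ i (MvPolynomial.X (Sum.inr p)) = Xt R₀ i p.1 p.2 := by
  simp only [φB, eval₂Hom_X']
noncomputable def Xg (R₀ : Type u) [CommRing R₀] (n : ℕ) : Matrix (Fin n) (Fin n) (TT R₀ n) :=
  fun a b => MvPolynomial.X (Sum.inr (a, b))
noncomputable def ug (R₀ : Type u) [CommRing R₀] (n : ℕ) : Matrix (Fin 1) (Fin n) (TT R₀ n) :=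
  fun _ j => MvPolynomial.X (Sum.inl (Sum.inl j))
noncomputable def vg (R₀ : Type u) [CommRing R₀] (n : ℕ) : Matrix (Fin n) (Fin 1) (TT R₀ n) :=
  fun k _ => MvPolynomial.X (Sum.inl (Sum.inr k))
lemma φB_mapMatrix : (φB R₀ i).mapMatrix (Xg R₀ n) = Xt R₀ i := by
  ext a b
  simp only [RingHom.mapMatrix_apply, Matrix.map_apply, Xg]
  exact φB_x R₀ i (a, b)
lemma φB_adj (k j : Fin n) :
    φB R₀ i ((Xg R₀ n).adjugate k j) = (Xt R₀ i).adjugate k j := by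
  have h1 := (φB R₀ i).map_adjugate (Xg R₀ n)
  have h2 : φB R₀ i ((Xg R₀ n).adjugate k j)
      = ((φB R₀ i).mapMatrix ((Xg R₀ n).adjugate)) k j := rfl
  rw [h2, h1, φB_mapMatrix]

lemma φB_uX (j : Fin n) : φB R₀ i ((ug R₀ n * Xg R₀ n) 0 j) = 0 := by
  rw [mul_apply, map_sum]
  have : ∀ m : Fin n, φB R₀ i (ug R₀ n 0 m * Xg R₀ n m j) = UU R₀ i m * Xt R₀ i m j := by
    intro m
    rw [_root_.map_mul]
    rw [show ug R₀ n 0 m = MvPolynomial.X (Sum.inl (Sum.inl m)) from rfl]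
    rw [show Xg R₀ n m j = MvPolynomial.X (Sum.inr (m, j)) from rfl]
    rw [φB_u, φB_x]
  simp_rw [this]
  exact R1 R₀ i j

lemma φB_Xv (k : Fin n) : φB R₀ i ((Xg R₀ n * vg R₀ n) k 0) = 0 := by
  rw [mul_apply, map_sum]
  have : ∀ j : Fin n, φB R₀ i (Xg R₀ n k j * vg R₀ n j 0)
      = iw R₀ i * (Xt R₀ i k j * (Xt R₀ i).adjugate j i) := by
    intro j
    rw [_root_.map_mul]
    rw [show Xg R₀ n k j = MvPolynomial.X (Sum.inr (k, j)) from rfl]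
    rw [show vg R₀ n j 0 = MvPolynomial.X (Sum.inl (Sum.inr j)) from rfl]
    rw [φB_x, φB_v]
    ring
  simp_rw [this]
  rw [← Finset.mul_sum, ← mul_apply, mul_adjugate, R2]
  simp

lemma φB_vu_adj (k j : Fin n) : φB R₀ i ((vg R₀ n * ug R₀ n - (Xg R₀ n).adjugate) k j) = 0 := by
  rw [Matrix.sub_apply, map_sub, φB_adj]
  have h1 : (vg R₀ n * ug R₀ n) k j = vg R₀ n k 0 * ug R₀ n 0 j := by
    rw [mul_apply, Fin.sum_univ_one]
  rw [h1, _root_.map_mul]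
  rw [show vg R₀ n k 0 = MvPolynomial.X (Sum.inl (Sum.inr k)) from rfl]
  rw [show ug R₀ n 0 j = MvPolynomial.X (Sum.inl (Sum.inl j)) from rfl]
  rw [φB_v, φB_u]
  have h2 : iw R₀ i * (Xt R₀ i).adjugate k i * UU R₀ i j
      = iw R₀ i * (UU R₀ i j * (Xt R₀ i).adjugate k i) := by ring
  rw [h2, R3, hUi]
  have h3 := hUiw R₀ i
  set a := algebraMap (BB R₀ i) (LB R₀ i) (wB R₀ i)
  set b := iw R₀ i
  set d := (Xt R₀ i).adjugate k j
  linear_combination d * h3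

lemma φB_kills : ∀ a ∈ idealH (ug R₀ n) (Xg R₀ n) (vg R₀ n), φB R₀ i a = 0 := by
  intro a ha
  have hle : idealH (ug R₀ n) (Xg R₀ n) (vg R₀ n) ≤ RingHom.ker (φB R₀ i) := by
    rw [idealH, Ideal.span_le]
    intro x hx
    simp only [Set.mem_union, Set.mem_range] at hx
    rw [SetLike.mem_coe, RingHom.mem_ker]
    obtain (⟨j, rfl⟩ | ⟨k, rfl⟩) | ⟨p, rfl⟩ := hx
    · exact φB_uX R₀ i j
    · exact φB_Xv R₀ i k
    · exact φB_vu_adj R₀ i p.1 p.2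
  exact hle ha

end Part2

section Main

variable (R₀ : Type u) [CommRing R₀] {n : ℕ} (i : Fin n)

noncomputable def sg : TT R₀ n := MvPolynomial.X (Sum.inl (Sum.inl i))

noncomputable def sb : TT R₀ n ⧸ idealH (ug R₀ n) (Xg R₀ n) (vg R₀ n) :=
  Ideal.Quotient.mk _ (sg R₀ i)

abbrev QQ := Localization.Away (sb R₀ i)

noncomputable def φq : TT R₀ n ⧸ idealH (ug R₀ n) (Xg R₀ n) (vg R₀ n) →+* LB R₀ i :=
  Ideal.Quotient.lift _ (φB R₀ i) (φB_kills R₀ i)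

lemma φq_sb : φq R₀ i (sb R₀ i) = algebraMap (BB R₀ i) (LB R₀ i) (wB R₀ i) := by
  rw [sb, φq, Ideal.Quotient.lift_mk, sg, φB_u, hUi]

lemma φq_sb_unit : IsUnit (φq R₀ i (sb R₀ i)) := by
  rw [φq_sb]; exact IsLocalization.Away.algebraMap_isUnit _

noncomputable def ΦQ : QQ R₀ i →+* LB R₀ i :=
  IsLocalization.Away.lift (sb R₀ i) (φq_sb_unit R₀ i)

noncomputable def cQ : TT R₀ n →+* QQ R₀ i :=
  (algebraMap (TT R₀ n ⧸ idealH (ug R₀ n) (Xg R₀ n) (vg R₀ n)) (QQ R₀ i)).comp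
    (Ideal.Quotient.mk _)

lemma hΦ_c (t : TT R₀ n) : ΦQ R₀ i (cQ R₀ i t) = φB R₀ i t := by
  rw [cQ, RingHom.comp_apply, ΦQ, IsLocalization.Away.lift_eq, φq, Ideal.Quotient.lift_mk]

lemma cQ_kills : ∀ a ∈ idealH (ug R₀ n) (Xg R₀ n) (vg R₀ n), cQ R₀ i a = 0 := by
  intro a ha
  rw [cQ, RingHom.comp_apply, Ideal.Quotient.eq_zero_iff_mem.mpr ha, map_zero]

noncomputable def ψ₀ : BB R₀ i →+* QQ R₀ i :=
  MvPolynomial.eval₂Hom ((cQ R₀ i).comp MvPolynomial.C)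
    (Sum.elim (fun k => cQ R₀ i (MvPolynomial.X (Sum.inl (Sum.inl k))))
      (fun p => cQ R₀ i (MvPolynomial.X (Sum.inr p.1))))

lemma ψ₀_C (r : R₀) : ψ₀ R₀ i (MvPolynomial.C r) = cQ R₀ i (MvPolynomial.C r) := by
  simp [ψ₀]

lemma ψ₀_u (k : Fin n) : ψ₀ R₀ i (MvPolynomial.X (Sum.inl k))
    = cQ R₀ i (MvPolynomial.X (Sum.inl (Sum.inl k))) := by
  simp only [ψ₀, eval₂Hom_X', Sum.elim_inl]

lemma ψ₀_x (p : {p : Fin n × Fin n // p.1 ≠ i}) : ψ₀ R₀ i (MvPolynomial.X (Sum.inr p))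
    = cQ R₀ i (MvPolynomial.X (Sum.inr p.1)) := by
  simp only [ψ₀, eval₂Hom_X', Sum.elim_inr]

lemma ψ₀_w_unit : IsUnit (ψ₀ R₀ i (wB R₀ i)) := by
  rw [wB, ψ₀_u]
  exact IsLocalization.Away.algebraMap_isUnit (sb R₀ i)

noncomputable def ΨQ : LB R₀ i →+* QQ R₀ i :=
  IsLocalization.Away.lift (wB R₀ i) (ψ₀_w_unit R₀ i)

lemma hΨ_b (b : BB R₀ i) : ΨQ R₀ i (algebraMap (BB R₀ i) (LB R₀ i) b) = ψ₀ R₀ i b :=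
  IsLocalization.Away.lift_eq _ _ _

lemma cs_unit : IsUnit (cQ R₀ i (sg R₀ i)) :=
  IsLocalization.Away.algebraMap_isUnit (sb R₀ i)

lemma hΨiw : cQ R₀ i (sg R₀ i) * ΨQ R₀ i (iw R₀ i) = 1 := by
  have h1 : cQ R₀ i (sg R₀ i) = ΨQ R₀ i (algebraMap (BB R₀ i) (LB R₀ i) (wB R₀ i)) := by
    rw [hΨ_b, wB, ψ₀_u, sg]
  rw [h1, ← _root_.map_mul, hUiw, _root_.map_one]

lemma hΨU (k : Fin n) : ΨQ R₀ i (UU R₀ i k) = cQ R₀ i (MvPolynomial.X (Sum.inl (Sum.inl k))) := by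
  rw [UU, hΨ_b, ψ₀_u]

lemma hΨY (m j : Fin n) : ΨQ R₀ i (YY R₀ i m j)
    = if m = i then 0 else cQ R₀ i (MvPolynomial.X (Sum.inr (m, j))) := by
  rw [YY]
  split_ifs with h
  · exact map_zero _
  · rw [hΨ_b]; exact ψ₀_x R₀ i ⟨(m, j), h⟩

lemma gen1_mem (j : Fin n) :
    (ug R₀ n * Xg R₀ n) 0 j ∈ idealH (ug R₀ n) (Xg R₀ n) (vg R₀ n) :=
  Ideal.subset_span (Set.mem_union_left _ (Set.mem_union_left _ ⟨j, rfl⟩))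

lemma gen3_mem (k j : Fin n) :
    (vg R₀ n * ug R₀ n - (Xg R₀ n).adjugate) k j ∈ idealH (ug R₀ n) (Xg R₀ n) (vg R₀ n) :=
  Ideal.subset_span (Set.mem_union_right _ ⟨(k, j), rfl⟩)

lemma hΨXt_i (j : Fin n) :
    ΨQ R₀ i (Xt R₀ i i j) = cQ R₀ i (MvPolynomial.X (Sum.inr (i, j))) := by
  have hXt : Xt R₀ i i j = -iw R₀ i * ∑ m', UU R₀ i m' * YY R₀ i m' j := by
    rw [Xt]; exact if_pos rfl
  apply (cs_unit R₀ i).mul_left_cancel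
  have e1 : ΨQ R₀ i (Xt R₀ i i j)
      = -ΨQ R₀ i (iw R₀ i) * ∑ m', ΨQ R₀ i (UU R₀ i m') * ΨQ R₀ i (YY R₀ i m' j) := by
    rw [hXt, _root_.map_mul, map_neg, map_sum]
    simp_rw [_root_.map_mul]
  have hg : cQ R₀ i ((ug R₀ n * Xg R₀ n) 0 j) = 0 :=
    cQ_kills R₀ i _ (gen1_mem R₀ j)
  rw [mul_apply, map_sum] at hg
  have hg' : ∑ m', cQ R₀ i (MvPolynomial.X (Sum.inl (Sum.inl m')))
      * cQ R₀ i (MvPolynomial.X (Sum.inr (m', j))) = 0 := by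
    rw [← hg]
    exact Finset.sum_congr rfl fun m' _ => (_root_.map_mul _ _ _).symm
  have e2 : ∀ m', ΨQ R₀ i (UU R₀ i m') * ΨQ R₀ i (YY R₀ i m' j)
      = cQ R₀ i (MvPolynomial.X (Sum.inl (Sum.inl m')))
          * cQ R₀ i (MvPolynomial.X (Sum.inr (m', j)))
        - (if m' = i then cQ R₀ i (MvPolynomial.X (Sum.inl (Sum.inl i)))
            * cQ R₀ i (MvPolynomial.X (Sum.inr (i, j))) else 0) := by
    intro m'
    rw [hΨU, hΨY]
    split_ifs with h'
    · rw [h']; ring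
    · ring
  have e3 : ∑ m', ΨQ R₀ i (UU R₀ i m') * ΨQ R₀ i (YY R₀ i m' j)
      = - (cQ R₀ i (MvPolynomial.X (Sum.inl (Sum.inl i)))
          * cQ R₀ i (MvPolynomial.X (Sum.inr (i, j)))) := by
    simp_rw [e2]
    rw [Finset.sum_sub_distrib, hg', Finset.sum_ite_eq' Finset.univ i]
    simp
  have e4 : cQ R₀ i (sg R₀ i) = cQ R₀ i (MvPolynomial.X (Sum.inl (Sum.inl i))) := rfl
  rw [e1, e3, e4]
  have h5 := hΨiw R₀ i
  rw [e4] at h5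
  set a := cQ R₀ i (MvPolynomial.X (Sum.inl (Sum.inl i)))
  set b := ΨQ R₀ i (iw R₀ i)
  set d := cQ R₀ i (MvPolynomial.X (Sum.inr (i, j)))
  linear_combination (a * d) * h5

lemma hΨXt (m j : Fin n) : ΨQ R₀ i (Xt R₀ i m j) = cQ R₀ i (MvPolynomial.X (Sum.inr (m, j))) := by
  rcases eq_or_ne m i with h | h
  · rw [h]; exact hΨXt_i R₀ i j
  · rw [Xt_ne R₀ i h, hΨ_b]
    exact ψ₀_x R₀ i ⟨(m, j), h⟩

lemma ΨQ_mapMatrix : (ΨQ R₀ i).mapMatrix (Xt R₀ i) = (cQ R₀ i).mapMatrix (Xg R₀ n) := by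
  ext m j
  simp only [RingHom.mapMatrix_apply, Matrix.map_apply]
  exact hΨXt R₀ i m j

lemma hΨadj (k j : Fin n) :
    ΨQ R₀ i ((Xt R₀ i).adjugate k j) = cQ R₀ i ((Xg R₀ n).adjugate k j) := by
  have h1 : ΨQ R₀ i ((Xt R₀ i).adjugate k j)
      = ((ΨQ R₀ i).mapMatrix ((Xt R₀ i).adjugate)) k j := rfl
  rw [h1, (ΨQ R₀ i).map_adjugate, ΨQ_mapMatrix, ← (cQ R₀ i).map_adjugate]
  rfl

lemma hΨv (k : Fin n) :
    ΨQ R₀ i (iw R₀ i * (Xt R₀ i).adjugate k i)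
      = cQ R₀ i (MvPolynomial.X (Sum.inl (Sum.inr k))) := by
  apply (cs_unit R₀ i).mul_left_cancel
  rw [_root_.map_mul, hΨadj]
  have hg : cQ R₀ i ((vg R₀ n * ug R₀ n - (Xg R₀ n).adjugate) k i) = 0 :=
    cQ_kills R₀ i _ (gen3_mem R₀ k i)
  rw [Matrix.sub_apply, map_sub] at hg
  have h1 : (vg R₀ n * ug R₀ n) k i
      = MvPolynomial.X (Sum.inl (Sum.inr k)) * sg R₀ i := by
    rw [mul_apply, Fin.sum_univ_one]; rfl
  rw [h1, _root_.map_mul] at hg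
  have h5 := hΨiw R₀ i
  set a := cQ R₀ i (sg R₀ i)
  set b := ΨQ R₀ i (iw R₀ i)
  set c := cQ R₀ i ((Xg R₀ n).adjugate k i)
  set d := cQ R₀ i (MvPolynomial.X (Sum.inl (Sum.inr k)))
  -- hg : d * a - c = 0, h5 : a * b = 1 ⊢ a * (b * c) = a * d
  linear_combination c * h5 - hg

lemma hca (t : TT R₀ n) :
    (algebraMap (TT R₀ n ⧸ idealH (ug R₀ n) (Xg R₀ n) (vg R₀ n)) (QQ R₀ i))
      (Ideal.Quotient.mk _ t) = cQ R₀ i t := rfl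

lemma EQ1 : (ΨQ R₀ i).comp (ΦQ R₀ i) = RingHom.id (QQ R₀ i) := by
  apply IsLocalization.ringHom_ext (Submonoid.powers (sb R₀ i))
  apply Ideal.Quotient.ringHom_ext
  apply MvPolynomial.ringHom_ext
  · intro r
    simp only [RingHom.comp_apply, RingHom.id_apply]
    rw [hca, hΦ_c, φB_C, hΨ_b, ψ₀_C]
  · intro t
    simp only [RingHom.comp_apply, RingHom.id_apply]
    rw [hca]
    obtain (k | k) | ⟨m, j⟩ := t
    · rw [hΦ_c, φB_u, hΨU]
    · rw [hΦ_c, φB_v, hΨv]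
    · rw [hΦ_c, φB_x, hΨXt]

lemma EQ2 : (ΦQ R₀ i).comp (ΨQ R₀ i) = RingHom.id (LB R₀ i) := by
  apply IsLocalization.ringHom_ext (Submonoid.powers (wB R₀ i))
  apply MvPolynomial.ringHom_ext
  · intro r
    simp only [RingHom.comp_apply, RingHom.id_apply]
    rw [hΨ_b, ψ₀_C, hΦ_c, φB_C]
  · intro t
    simp only [RingHom.comp_apply, RingHom.id_apply]
    obtain k | ⟨⟨m, j⟩, h⟩ := t
    · rw [hΨ_b, ψ₀_u, hΦ_c, φB_u, UU]
    · rw [hΨ_b, ψ₀_x, hΦ_c, φB_x, Xt_ne R₀ i h]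

/-- the ring isomorphism `(R/H)_{uᵢ} ≃ (small polynomial ring)_{uᵢ}` -/
noncomputable def EqQL : QQ R₀ i ≃+* LB R₀ i :=
  RingEquiv.ofRingHom (ΦQ R₀ i) (ΨQ R₀ i) (EQ2 R₀ i) (EQ1 R₀ i)

lemma card_BBσ : Fintype.card (BBσ n i) = n * n := by
  have e1 : {p : Fin n × Fin n // p.1 = i} ≃ Fin n :=
    ⟨fun p => p.1.2, fun j => ⟨(i, j), rfl⟩,
      fun p => by
        obtain ⟨⟨a, b⟩, h⟩ := p
        cases h
        rfl,
      fun j => rfl⟩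
  have h1 : Fintype.card {p : Fin n × Fin n // p.1 = i} = n := by
    rw [Fintype.card_congr e1, Fintype.card_fin]
  have h2 : Fintype.card {p : Fin n × Fin n // p.1 ≠ i} = n * n - n := by
    have h3 := Fintype.card_subtype_compl (fun p : Fin n × Fin n => p.1 = i)
    rw [h1] at h3
    simpa using h3
  have h4 : Fintype.card (BBσ n i) = n + (n * n - n) := by
    rw [Fintype.card_sum, Fintype.card_fin, h2]
  have h5 : n ≤ n * n := Nat.le_mul_of_pos_left n i.pos
  omega

theorem part2_exists :
    ∃ S : Submonoid (MvPolynomial (Fin (n * n)) R₀),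
      Nonempty (Localization.Away (sb R₀ i) ≃+* Localization S) := by
  let e : BBσ n i ≃ Fin (n * n) := Fintype.equivFinOfCardEq (card_BBσ i)
  let e' : BB R₀ i ≃+* MvPolynomial (Fin (n * n)) R₀ :=
    (MvPolynomial.renameEquiv R₀ e).toRingEquiv
  refine ⟨(Submonoid.powers (wB R₀ i)).map e'.toMonoidHom, ⟨?_⟩⟩
  exact (EqQL R₀ i).trans
    (IsLocalization.ringEquivOfRingEquiv (M := Submonoid.powers (wB R₀ i))
      (T := (Submonoid.powers (wB R₀ i)).map e'.toMonoidHom) (LB R₀ i)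
      (Localization ((Submonoid.powers (wB R₀ i)).map e'.toMonoidHom)) e' rfl)



end Main

theorem part1 (R₀ : Type u) [CommRing R₀] {n : ℕ} (i : Fin n) :
    (idealH (ug R₀ n) (Xg R₀ n) (vg R₀ n)).map
        (algebraMap (TT R₀ n) (Localization.Away (ug R₀ n 0 i))) =
      (Ideal.span
          ((Set.range fun j : Fin n => (ug R₀ n * Xg R₀ n) 0 j) ∪
            (Set.range fun k : Fin n => (vg R₀ n * ug R₀ n - (Xg R₀ n).adjugate) k i))).map
        (algebraMap (TT R₀ n) (Localization.Away (ug R₀ n 0 i))) := by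
  set s : TT R₀ n := ug R₀ n 0 i with hs
  set J0 : Ideal (TT R₀ n) := Ideal.span
      ((Set.range fun j : Fin n => (ug R₀ n * Xg R₀ n) 0 j) ∪
        (Set.range fun k : Fin n => (vg R₀ n * ug R₀ n - (Xg R₀ n).adjugate) k i)) with hJ0
  set f := algebraMap (TT R₀ n) (Localization.Away s) with hf
  have hg1 : ∀ l : Fin n, (ug R₀ n * Xg R₀ n) 0 l ∈ J0 := fun l =>
    Ideal.subset_span (Set.mem_union_left _ ⟨l, rfl⟩)
  have hg2 : ∀ k : Fin n, (vg R₀ n * ug R₀ n - (Xg R₀ n).adjugate) k i ∈ J0 := fun k =>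
    Ideal.subset_span (Set.mem_union_right _ ⟨k, rfl⟩)
  have huX : ∀ l : Fin n,
      ∑ m, (fun m => (MvPolynomial.X (Sum.inl (Sum.inl m)) : TT R₀ n)) m * Xg R₀ n m l ∈ J0 := by
    intro l
    have := hg1 l
    rwa [mul_apply] at this
  have hdet : (Xg R₀ n).det * s ∈ J0 := det_mul_mem _ _ huX i
  have hadjm : ∀ a b k : Fin n,
      (MvPolynomial.X (Sum.inl (Sum.inl a)) : TT R₀ n) * (Xg R₀ n).adjugate k b
        - MvPolynomial.X (Sum.inl (Sum.inl b)) * (Xg R₀ n).adjugate k a ∈ J0 :=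
    fun a b k => key_adj_mem _ _ huX a b k
  have hu : IsUnit (f s) := IsLocalization.Away.algebraMap_isUnit s
  apply le_antisymm
  · rw [idealH, Ideal.map_le_iff_le_comap, Ideal.span_le]
    intro x hx
    simp only [Set.mem_union, Set.mem_range] at hx
    rw [SetLike.mem_coe, Ideal.mem_comap]
    obtain (⟨j, rfl⟩ | ⟨k, rfl⟩) | ⟨p, rfl⟩ := hx
    · exact Ideal.mem_map_of_mem f (hg1 j)
    · -- entries of X·v
      have e1 : s * ((Xg R₀ n * vg R₀ n) k 0)
          = (∑ j, Xg R₀ n k j * ((vg R₀ n * ug R₀ n - (Xg R₀ n).adjugate) j i))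
            + (Xg R₀ n * (Xg R₀ n).adjugate) k i := by
        rw [mul_apply, Finset.mul_sum, mul_apply, ← Finset.sum_add_distrib]
        refine Finset.sum_congr rfl fun j _ => ?_
        rw [Matrix.sub_apply, mul_apply, Fin.sum_univ_one]
        have h2 : ug R₀ n 0 i = s := rfl
        rw [h2]
        ring
      have hs2 : s * (s * ((Xg R₀ n * vg R₀ n) k 0)) ∈ J0 := by
        rw [show s * (s * ((Xg R₀ n * vg R₀ n) k 0))
            = (s * ((Xg R₀ n * vg R₀ n) k 0)) * s from by ring, e1]
        rw [mul_adjugate]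
        have e2 : (∑ j, Xg R₀ n k j * ((vg R₀ n * ug R₀ n - (Xg R₀ n).adjugate) j i)
              + ((Xg R₀ n).det • (1 : Matrix (Fin n) (Fin n) (TT R₀ n))) k i) * s
            = (∑ j, Xg R₀ n k j * ((vg R₀ n * ug R₀ n - (Xg R₀ n).adjugate) j i)) * s
              + ((Xg R₀ n).det * s) * (1 : Matrix (Fin n) (Fin n) (TT R₀ n)) k i := by
          rw [Matrix.smul_apply, smul_eq_mul]; ring
        rw [e2]
        refine Ideal.add_mem _ ?_ (Ideal.mul_mem_right _ _ hdet)
        exact Ideal.mul_mem_right _ _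
          (Ideal.sum_mem _ fun j _ => Ideal.mul_mem_left _ _ (hg2 j))
      have := Ideal.mem_map_of_mem f hs2
      rw [_root_.map_mul, _root_.map_mul] at this
      rwa [Ideal.unit_mul_mem_iff_mem _ hu, Ideal.unit_mul_mem_iff_mem _ hu] at this
    · -- entries of v·u − adj X
      obtain ⟨k, j⟩ := p
      have e1 : s * ((vg R₀ n * ug R₀ n - (Xg R₀ n).adjugate) k j)
          = ug R₀ n 0 j * ((vg R₀ n * ug R₀ n - (Xg R₀ n).adjugate) k i)
            + (MvPolynomial.X (Sum.inl (Sum.inl j)) * (Xg R₀ n).adjugate k i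
                - MvPolynomial.X (Sum.inl (Sum.inl i)) * (Xg R₀ n).adjugate k j) := by
        rw [Matrix.sub_apply, Matrix.sub_apply, mul_apply, Fin.sum_univ_one, mul_apply, Fin.sum_univ_one]
        have h2 : ∀ m : Fin n, ug R₀ n 0 m = (MvPolynomial.X (Sum.inl (Sum.inl m)) : TT R₀ n) :=
          fun _ => rfl
        simp only [hs, h2]
        ring
      have hs1 : s * ((vg R₀ n * ug R₀ n - (Xg R₀ n).adjugate) k j) ∈ J0 := by
        rw [e1]
        exact Ideal.add_mem _ (Ideal.mul_mem_left _ _ (hg2 k)) (hadjm j i k)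
      have := Ideal.mem_map_of_mem f hs1
      rw [_root_.map_mul] at this
      rwa [Ideal.unit_mul_mem_iff_mem _ hu] at this
  · refine Ideal.map_mono (Ideal.span_le.mpr ?_)
    intro x hx
    simp only [Set.mem_union, Set.mem_range] at hx
    rw [idealH]
    obtain ⟨j, rfl⟩ | ⟨k, rfl⟩ := hx
    · exact Ideal.subset_span (Set.mem_union_left _ (Set.mem_union_left _ ⟨j, rfl⟩))
    · exact Ideal.subset_span (Set.mem_union_right _ ⟨(k, i), rfl⟩)


/-- Lemma 5.2 (the case `s = uᵢ`): after inverting `s = uᵢ`, the ideal `H` is generated by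
the entries of `u·X` together with the entries of the `i`-th column of `v·u − adjugate X`;
consequently `(R/H)_s` is isomorphic to a localization of a polynomial ring in `n²`
variables over `R₀`. -/
theorem localization_at_u (R₀ : Type u) [CommRing R₀] [IsNoetherianRing R₀]
    (n : ℕ) (hn : 3 ≤ n)
    (u : Matrix (Fin 1) (Fin n) (MvPolynomial ((Fin n ⊕ Fin n) ⊕ Fin n × Fin n) R₀))
    (hu : u = fun _ j => MvPolynomial.X (Sum.inl (Sum.inl j)))
    (v : Matrix (Fin n) (Fin 1) (MvPolynomial ((Fin n ⊕ Fin n) ⊕ Fin n × Fin n) R₀))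
    (hv : v = fun i _ => MvPolynomial.X (Sum.inl (Sum.inr i)))
    (Xm : Matrix (Fin n) (Fin n) (MvPolynomial ((Fin n ⊕ Fin n) ⊕ Fin n × Fin n) R₀))
    (hX : Xm = fun i j => MvPolynomial.X (Sum.inr (i, j)))
    (i : Fin n) :
    (idealH u Xm v).map
        (algebraMap (MvPolynomial ((Fin n ⊕ Fin n) ⊕ Fin n × Fin n) R₀)
          (Localization.Away (u 0 i))) =
      (Ideal.span
          ((Set.range fun j : Fin n => (u * Xm) 0 j) ∪
            (Set.range fun k : Fin n => (v * u - Xm.adjugate) k i))).map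
        (algebraMap (MvPolynomial ((Fin n ⊕ Fin n) ⊕ Fin n × Fin n) R₀)
          (Localization.Away (u 0 i))) ∧
      ∃ S : Submonoid (MvPolynomial (Fin (n * n)) R₀),
        Nonempty
          (Localization.Away (Ideal.Quotient.mk (idealH u Xm v) (u 0 i)) ≃+*
            Localization S) := by
  subst hu hv hX
  constructor
  · exact part1 R₀ i
  · exact part2_exists R₀ i
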